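/- Let H be a hypothesis space and 𝒟 a prior-unknown domain space. If there exists a domain D_XY ∈ 𝒟 that has overlap between its ID and OOD distributions and satisfies inf_{h∈H} R_D^in(h) = 0 and inf_{h∈H} R_D^out(h) = 0, then inf_{h∈H} R_D^α(h) > 0 for every α ∈ (0,1), so the linear condition under risk fails; consequently, OOD detection is not learnable under risk in 𝒟 for H. -/

import Mathlib

open MeasureTheory Filter Set
open scoped ENNReal NNReal

noncomputable section

namespace OODF

/-- A *domain*: a mixture `(1-π)·D_I + π·D_O` of an ID joint distribution `D_I` on
`𝒳 × {1,…,K}` and an OOD joint distribution `D_O` on `𝒳 × {K+1}`, with class prior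
`π ∈ [0,1)`.  Labels are encoded as naturals: ID labels are `{1,…,K}`, OOD label is `K+1`. -/
structure Domain (𝒳 : Type*) [MeasurableSpace 𝒳] (K : ℕ) where
  DI : Measure (𝒳 × ℕ)
  DO : Measure (𝒳 × ℕ)
  prior : ℝ
  probI : IsProbabilityMeasure DI
  probO : IsProbabilityMeasure DO
  suppI : DI {p | p.2 ∉ Set.Icc 1 K} = 0
  suppO : DO {p | p.2 ≠ K + 1} = 0
  prior_mem : prior ∈ Set.Ico (0 : ℝ) 1

variable {𝒳 : Type*} [MeasurableSpace 𝒳] {K : ℕ}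

namespace Domain

/-- the mixed joint distribution `D_XY = (1-π)·D_I + π·D_O` -/
def joint (D : Domain 𝒳 K) : Measure (𝒳 × ℕ) :=
  ENNReal.ofReal (1 - D.prior) • D.DI + ENNReal.ofReal D.prior • D.DO

/-- the marginal `D_{X_I}` of the ID joint distribution on the feature space -/
def margI (D : Domain 𝒳 K) : Measure 𝒳 := D.DI.map Prod.fst

/-- the marginal `D_{X_O}` of the OOD joint distribution on the feature space -/
def margO (D : Domain 𝒳 K) : Measure 𝒳 := D.DO.map Prod.fst

/-- the domain `D^α = (1-α)·D_I + α·D_O`, i.e. `D` with its class prior replaced by `α` -/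
def withPrior (D : Domain 𝒳 K) (α : Set.Ico (0 : ℝ) 1) : Domain 𝒳 K :=
  { D with prior := α.1, prior_mem := α.2 }

end Domain

/-- a prior-unknown domain space: closed under changing the class prior -/
def PriorUnknown (𝒟 : Set (Domain 𝒳 K)) : Prop :=
  ∀ D ∈ 𝒟, ∀ α : Set.Ico (0 : ℝ) 1, D.withPrior α ∈ 𝒟

/-- the risk `R_D(h)` w.r.t. the mixed joint distribution -/
def risk (ℓ : ℕ → ℕ → ℝ) (D : Domain 𝒳 K) (h : 𝒳 → ℕ) : ℝ :=
  ∫ p, ℓ (h p.1) p.2 ∂D.joint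

/-- the ID risk `R_D^in(h)` -/
def riskIn (ℓ : ℕ → ℕ → ℝ) (D : Domain 𝒳 K) (h : 𝒳 → ℕ) : ℝ :=
  ∫ p, ℓ (h p.1) p.2 ∂D.DI

/-- the OOD risk `R_D^out(h)` -/
def riskOut (ℓ : ℕ → ℕ → ℝ) (D : Domain 𝒳 K) (h : 𝒳 → ℕ) : ℝ :=
  ∫ p, ℓ (h p.1) (K + 1) ∂D.DO

/-- the `α`-risk `R_D^α(h) = (1-α)·R_D^in(h) + α·R_D^out(h)` -/
def riskA (ℓ : ℕ → ℕ → ℝ) (D : Domain 𝒳 K) (h : 𝒳 → ℕ) (α : ℝ) : ℝ :=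
  (1 - α) * riskIn ℓ D h + α * riskOut ℓ D h

/-- the distribution of an i.i.d. sample of size `n` from the ID joint distribution -/
def sampleMeasure (D : Domain 𝒳 K) (n : ℕ) : Measure (Fin n → 𝒳 × ℕ) :=
  letI := D.probI
  Measure.pi fun _ => D.DI

/-- An algorithm maps, for every sample size `n ≥ 1`, a labeled sample to a function on `𝒳`. -/
abbrev Algorithm (𝒳 β : Type*) := (n : ℕ) → (Fin n → 𝒳 × ℕ) → (𝒳 → β)

/-- `A` is consistent w.r.t. `𝒟` under risk with rate `ε`: it outputs hypotheses in `H`,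
the resulting risks are measurable in the sample, and the expected excess risk for samples
of size `n ≥ 1` is at most `ε n`. -/
def ConsistentRisk (ℓ : ℕ → ℕ → ℝ) (𝒟 : Set (Domain 𝒳 K)) (H : Set (𝒳 → ℕ))
    (A : Algorithm 𝒳 ℕ) (ε : ℕ → ℝ) : Prop :=
  (∀ n : ℕ, 1 ≤ n → ∀ S, A n S ∈ H) ∧
  (∀ D ∈ 𝒟, ∀ n : ℕ, 1 ≤ n → Measurable fun S : Fin n → 𝒳 × ℕ => risk ℓ D (A n S)) ∧
  ∀ D ∈ 𝒟, ∀ n : ℕ, 1 ≤ n →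
    ∫ S, (risk ℓ D (A n S) - ⨅ h : H, risk ℓ D h.1) ∂(sampleMeasure D n) ≤ ε n

/-- OOD detection is learnable under risk in `𝒟` for `H` with the given rate. -/
def LearnableRiskRate (ℓ : ℕ → ℕ → ℝ) (𝒟 : Set (Domain 𝒳 K)) (H : Set (𝒳 → ℕ))
    (ε : ℕ → ℝ) : Prop :=
  ∃ A, ConsistentRisk ℓ 𝒟 H A ε

/-- learnability of OOD detection under risk -/
def LearnableRisk (ℓ : ℕ → ℕ → ℝ) (𝒟 : Set (Domain 𝒳 K)) (H : Set (𝒳 → ℕ)) : Prop :=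
  ∃ ε : ℕ → ℝ, Antitone ε ∧ Tendsto ε atTop (nhds 0) ∧ LearnableRiskRate ℓ 𝒟 H ε

/-- `A` is strongly consistent: the expected excess `α`-risks are uniformly small over
all `α ∈ [0,1]`. -/
def StrongConsistentRisk (ℓ : ℕ → ℕ → ℝ) (𝒟 : Set (Domain 𝒳 K)) (H : Set (𝒳 → ℕ))
    (A : Algorithm 𝒳 ℕ) (ε : ℕ → ℝ) : Prop :=
  (∀ n : ℕ, 1 ≤ n → ∀ S, A n S ∈ H) ∧
  (∀ D ∈ 𝒟, ∀ n : ℕ, 1 ≤ n → ∀ α : ℝ,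
    Measurable fun S : Fin n → 𝒳 × ℕ => riskA ℓ D (A n S) α) ∧
  ∀ D ∈ 𝒟, ∀ n : ℕ, 1 ≤ n → ∀ α ∈ Set.Icc (0 : ℝ) 1,
    ∫ S, (riskA ℓ D (A n S) α - ⨅ h : H, riskA ℓ D h.1 α) ∂(sampleMeasure D n) ≤ ε n

/-- strong learnability of OOD detection under risk -/
def StrongLearnableRisk (ℓ : ℕ → ℕ → ℝ) (𝒟 : Set (Domain 𝒳 K)) (H : Set (𝒳 → ℕ)) : Prop :=
  ∃ ε : ℕ → ℝ, Antitone ε ∧ Tendsto ε atTop (nhds 0) ∧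
    ∃ A, StrongConsistentRisk ℓ 𝒟 H A ε

/-- the AUC of a ranking function `r` w.r.t. ID marginal `P` and OOD marginal `Q`:
`AUC(r) = E_{x ~ P} E_{x' ~ Q} [1_{r(x) > r(x')} + (1/2)·1_{r(x) = r(x')}]` -/
def AUC (r : 𝒳 → ℝ) (P Q : Measure 𝒳) : ℝ :=
  ∫ x, (∫ x', ((if r x' < r x then (1 : ℝ) else 0) +
      (1 / 2) * (if r x = r x' then (1 : ℝ) else 0)) ∂Q) ∂P

/-- `A` is AUC-consistent w.r.t. `𝒟` with rate `ε`. -/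
def ConsistentAUC (𝒟 : Set (Domain 𝒳 K)) (R : Set (𝒳 → ℝ))
    (A : Algorithm 𝒳 ℝ) (ε : ℕ → ℝ) : Prop :=
  (∀ n : ℕ, 1 ≤ n → ∀ S, A n S ∈ R) ∧
  (∀ D ∈ 𝒟, ∀ n : ℕ, 1 ≤ n →
    Measurable fun S : Fin n → 𝒳 × ℕ => AUC (A n S) D.margI D.margO) ∧
  ∀ D ∈ 𝒟, ∀ n : ℕ, 1 ≤ n →
    ∫ S, ((⨆ r : R, AUC r.1 D.margI D.margO) - AUC (A n S) D.margI D.margO)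
      ∂(sampleMeasure D n) ≤ ε n

/-- OOD detection is learnable under AUC in `𝒟` for `R` with the given rate. -/
def LearnableAUCRate (𝒟 : Set (Domain 𝒳 K)) (R : Set (𝒳 → ℝ)) (ε : ℕ → ℝ) : Prop :=
  ∃ A, ConsistentAUC 𝒟 R A ε

/-- learnability of OOD detection under AUC -/
def LearnableAUC (𝒟 : Set (Domain 𝒳 K)) (R : Set (𝒳 → ℝ)) : Prop :=
  ∃ ε : ℕ → ℝ, Antitone ε ∧ Tendsto ε atTop (nhds 0) ∧ LearnableAUCRate 𝒟 R ε

/-- the (topological) support of a measure -/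
def mSupport {α : Type*} [TopologicalSpace α] [MeasurableSpace α] (μ : Measure α) : Set α :=
  {x | ∀ U ∈ nhds x, 0 < μ U}

/-- the separate space `𝒟^s`: all domains whose ID and OOD marginals have disjoint supports -/
def separateSpace (𝒳 : Type*) [MeasurableSpace 𝒳] [TopologicalSpace 𝒳] (K : ℕ) :
    Set (Domain 𝒳 K) :=
  {D | mSupport D.margO ∩ mSupport D.margI = ∅}

/-- a class `G` of binary functions (encoded as predicates) shatters the finite set `C` -/
def Shatters {α : Type*} (G : Set (α → Prop)) (C : Finset α) : Prop :=
  ∀ f : α → Prop, ∃ g ∈ G, ∀ x ∈ C, g x ↔ f x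

/-- the VC dimension of a class of binary functions (encoded as predicates) -/
def VCdim {α : Type*} (G : Set (α → Prop)) : ℕ∞ :=
  sSup {n : ℕ∞ | ∃ C : Finset α, Shatters G C ∧ n = (C.card : ℕ∞)}

/-- `D` has overlap between its ID and OOD distributions: there is a σ-finite measure
w.r.t. which both marginals have densities that are simultaneously positive on a set of
positive measure. -/
def HasOverlap (D : Domain 𝒳 K) : Prop :=
  ∃ μt : Measure 𝒳, SigmaFinite μt ∧
    ∃ fI fO : 𝒳 → ℝ≥0∞, Measurable fI ∧ Measurable fO ∧
      D.margI = μt.withDensity fI ∧ D.margO = μt.withDensity fO ∧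
      0 < μt {x | 0 < fI x ∧ 0 < fO x}

set_option maxHeartbeats 1000000 in
/-- Lemma 3 / Theorem `T5` of the paper.  In a prior-unknown space `𝒟`,
if some domain `D ∈ 𝒟` has overlap between ID and OOD and both
`inf_{h∈H} R_D^in(h) = 0` and `inf_{h∈H} R_D^out(h) = 0`, then `inf_{h∈H} R_D^α(h) > 0`
for every `α ∈ (0,1)`, the linear condition under risk fails, and OOD detection is not
learnable under risk in `𝒟` for `H`. -/
theorem stmt4 {d K : ℕ} (X : Set (EuclideanSpace ℝ (Fin d)))
    (ℓ : ℕ → ℕ → ℝ)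
    (hl_nonneg : ∀ y₁ y₂, 0 ≤ ℓ y₁ y₂)
    (hl_zero : ∀ y₁ ∈ Set.Icc 1 (K + 1), ∀ y₂ ∈ Set.Icc 1 (K + 1), (ℓ y₁ y₂ = 0 ↔ y₁ = y₂))
    (hl_bdd : ∃ B, ∀ y₁ ∈ Set.Icc 1 (K + 1), ∀ y₂ ∈ Set.Icc 1 (K + 1), ℓ y₁ y₂ ≤ B)
    (H : Set (↥X → ℕ)) (hHne : H.Nonempty)
    (hH : ∀ h ∈ H, Measurable h ∧ ∀ x, h x ∈ Set.Icc 1 (K + 1))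
    (𝒟 : Set (Domain ↥X K)) (hPU : PriorUnknown 𝒟)
    (D : Domain ↥X K) (hD : D ∈ 𝒟) (hover : HasOverlap D)
    (hin : (⨅ h : H, riskIn ℓ D h.1) = 0)
    (hout : (⨅ h : H, riskOut ℓ D h.1) = 0) :
    (∀ α ∈ Set.Ioo (0 : ℝ) 1, 0 < ⨅ h : H, riskA ℓ D h.1 α) ∧
    ¬ (∀ D' ∈ 𝒟, ∀ α ∈ Set.Ico (0 : ℝ) 1,
        (⨅ h : H, riskA ℓ D' h.1 α)
          = (1 - α) * (⨅ h : H, riskIn ℓ D' h.1) + α * (⨅ h : H, riskOut ℓ D' h.1)) ∧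
    ¬ LearnableRisk ℓ 𝒟 H := by
  classical
  obtain ⟨B, hB⟩ := hl_bdd
  obtain ⟨μt, hσ, fI, fO, hfI, hfO, hmI, hmO, hpos⟩ := hover
  haveI := D.probI
  haveI := D.probO
  haveI : Nonempty H := hHne.to_subtype
  haveI hPmI : IsProbabilityMeasure D.margI :=
    Measure.isProbabilityMeasure_map measurable_fst.aemeasurable
  haveI hPmO : IsProbabilityMeasure D.margO :=
    Measure.isProbabilityMeasure_map measurable_fst.aemeasurable
  set B' : ℝ := max B 0 with hB'def
  have hB'0 : (0:ℝ) ≤ B' := le_max_right _ _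
  -- K ≥ 1
  have hK : 1 ≤ K := by
    by_contra hK
    have hKe : (Set.Icc 1 K : Set ℕ) = ∅ := by
      ext y; simp only [Set.mem_Icc, Set.mem_empty_iff_false, iff_false]; omega
    have h1 : D.DI {p : ↥X × ℕ | p.2 ∉ Set.Icc 1 K} = 1 := by
      rw [hKe]; simpa using (measure_univ : D.DI Set.univ = 1)
    rw [D.suppI] at h1; exact zero_ne_one h1
  -- the minimal positive loss value
  have hFne : (Finset.Icc 1 K).Nonempty := ⟨1, by simp [hK]⟩
  set c1 : ℝ := (Finset.Icc 1 K).inf' hFne (fun y => min (ℓ (K+1) y) (ℓ y (K+1))) with hc1def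
  have hc1pos : 0 < c1 := by
    rw [hc1def, Finset.lt_inf'_iff]
    intro y hy
    rw [Finset.mem_Icc] at hy
    have hy1 : y ∈ Set.Icc 1 (K+1) := ⟨hy.1, by omega⟩
    have hK1 : K + 1 ∈ Set.Icc 1 (K+1) := ⟨by omega, le_refl _⟩
    have hne : y ≠ K + 1 := by omega
    refine lt_min (lt_of_le_of_ne (hl_nonneg _ _) ?_) (lt_of_le_of_ne (hl_nonneg _ _) ?_)
    · intro h0; exact hne ((hl_zero _ hK1 _ hy1).1 h0.symm).symm
    · intro h0; exact hne ((hl_zero _ hy1 _ hK1).1 h0.symm)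
  have hc1le : ∀ y ∈ Set.Icc 1 K, c1 ≤ ℓ (K+1) y ∧ c1 ≤ ℓ y (K+1) := by
    intro y hy
    have hy' : y ∈ Finset.Icc 1 K := by rw [Finset.mem_Icc]; exact hy
    constructor
    · exact le_trans (Finset.inf'_le _ hy') (min_le_left _ _)
    · exact le_trans (Finset.inf'_le _ hy') (min_le_right _ _)
  -- measurability of integrands
  have hmeasI : ∀ h : ↥X → ℕ, Measurable h →
      Measurable (fun p : ↥X × ℕ => ℓ (h p.1) p.2) := by
    intro h hm
    have h1 : Measurable (fun p : ↥X × ℕ => (h p.1, p.2)) :=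
      (hm.comp measurable_fst).prodMk measurable_snd
    exact (measurable_of_countable (fun q : ℕ × ℕ => ℓ q.1 q.2)).comp h1
  have hmeasO : ∀ h : ↥X → ℕ, Measurable h →
      Measurable (fun p : ↥X × ℕ => ℓ (h p.1) (K+1)) := by
    intro h hm
    exact (measurable_of_countable (fun y : ℕ => ℓ y (K+1))).comp (hm.comp measurable_fst)
  -- a.e. label facts
  have haeI : ∀ᵐ p ∂D.DI, p.2 ∈ Set.Icc 1 K := by
    rw [ae_iff]; exact D.suppI
  have haeO : ∀ᵐ p ∂D.DO, p.2 = K + 1 := by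
    rw [ae_iff]; exact D.suppO
  -- integrability
  have hIntI : ∀ h ∈ H, Integrable (fun p : ↥X × ℕ => ℓ (h p.1) p.2) D.DI := by
    intro h hh
    obtain ⟨hm, hr⟩ := hH h hh
    refine Integrable.mono' (integrable_const B') (hmeasI h hm).aestronglyMeasurable ?_
    filter_upwards [haeI] with p hp
    rw [Real.norm_eq_abs, abs_of_nonneg (hl_nonneg _ _)]
    exact le_trans (hB _ (hr p.1) _ ⟨hp.1, hp.2.trans (Nat.le_succ K)⟩) (le_max_left _ _)
  have hIntO : ∀ h ∈ H, Integrable (fun p : ↥X × ℕ => ℓ (h p.1) (K+1)) D.DO := by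
    intro h hh
    obtain ⟨hm, hr⟩ := hH h hh
    refine Integrable.mono' (integrable_const B') (hmeasO h hm).aestronglyMeasurable ?_
    refine Filter.Eventually.of_forall (fun p => ?_)
    rw [Real.norm_eq_abs, abs_of_nonneg (hl_nonneg _ _)]
    exact le_trans (hB _ (hr p.1) _ ⟨by omega, le_refl _⟩) (le_max_left _ _)
  have hIntO' : ∀ h ∈ H, Integrable (fun p : ↥X × ℕ => ℓ (h p.1) p.2) D.DO := by
    intro h hh
    refine (hIntO h hh).congr ?_
    filter_upwards [haeO] with p hp
    rw [hp]
  -- risk bounds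
  have hInNN : ∀ h, 0 ≤ riskIn ℓ D h :=
    fun h => integral_nonneg (fun p => hl_nonneg _ _)
  have hOutNN : ∀ h, 0 ≤ riskOut ℓ D h :=
    fun h => integral_nonneg (fun p => hl_nonneg _ _)
  have hInB : ∀ h ∈ H, riskIn ℓ D h ≤ B' := by
    intro h hh
    obtain ⟨hm, hr⟩ := hH h hh
    have : riskIn ℓ D h ≤ ∫ _p : ↥X × ℕ, B' ∂D.DI := by
      refine integral_mono_ae (hIntI h hh) (integrable_const _) ?_
      filter_upwards [haeI] with p hp
      exact le_trans (hB _ (hr p.1) _ ⟨hp.1, hp.2.trans (Nat.le_succ K)⟩) (le_max_left _ _)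
    simpa using this
  have hOutB : ∀ h ∈ H, riskOut ℓ D h ≤ B' := by
    intro h hh
    obtain ⟨hm, hr⟩ := hH h hh
    have : riskOut ℓ D h ≤ ∫ _p : ↥X × ℕ, B' ∂D.DO := by
      refine integral_mono_ae (hIntO h hh) (integrable_const _) ?_
      refine Filter.Eventually.of_forall (fun p => ?_)
      exact le_trans (hB _ (hr p.1) _ ⟨by omega, le_refl _⟩) (le_max_left _ _)
    simpa using this
  -- the overlap mass
  set m : ℝ≥0∞ := ∫⁻ x, min (fI x) (fO x) ∂μt with hmdef
  have hmne : m ≠ ⊤ := by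
    have h1 : m ≤ ∫⁻ x, fI x ∂μt :=
      lintegral_mono (fun x => min_le_left _ _)
    have h2 : (∫⁻ x, fI x ∂μt) = D.margI Set.univ := by
      rw [hmI, withDensity_apply _ MeasurableSet.univ, Measure.restrict_univ]
    rw [h2, measure_univ] at h1
    exact ne_top_of_le_ne_top ENNReal.one_ne_top h1
  have hmpos : 0 < m := by
    rw [hmdef, lintegral_pos_iff_support (hfI.min hfO)]
    refine lt_of_lt_of_le hpos (measure_mono ?_)
    intro x hx
    simp only [Function.mem_support]
    exact ne_of_gt (lt_min hx.1 hx.2)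
  set mR : ℝ := m.toReal with hmRdef
  have hmRpos : 0 < mR := ENNReal.toReal_pos (ne_of_gt hmpos) hmne
  -- lower bounds on risks via the rejection region
  have hInLB : ∀ h ∈ H, c1 * (D.margI {x | h x = K+1}).toReal ≤ riskIn ℓ D h := by
    intro h hh
    obtain ⟨hm, hr⟩ := hH h hh
    have hA : MeasurableSet {x | h x = K+1} := hm (measurableSet_singleton (K+1))
    have hT : MeasurableSet (Prod.fst ⁻¹' {x : ↥X | h x = K+1} : Set (↥X × ℕ)) :=
      hA.preimage measurable_fst
    have hmarg : D.margI {x | h x = K+1} = D.DI (Prod.fst ⁻¹' {x | h x = K+1}) :=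
      Measure.map_apply measurable_fst hA
    have hle : ∫ p, (Prod.fst ⁻¹' {x : ↥X | h x = K+1}).indicator (fun _ => c1) p ∂D.DI
        ≤ riskIn ℓ D h := by
      refine integral_mono_ae ((integrable_const c1).indicator hT) (hIntI h hh) ?_
      filter_upwards [haeI] with p hp
      by_cases hpA : p ∈ Prod.fst ⁻¹' {x : ↥X | h x = K+1}
      · rw [Set.indicator_of_mem hpA]
        have hp1 : h p.1 = K + 1 := hpA
        rw [hp1]
        exact (hc1le p.2 hp).1
      · rw [Set.indicator_of_notMem hpA]
        exact hl_nonneg _ _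
    rw [integral_indicator_const _ hT] at hle
    rw [hmarg, mul_comm]
    simpa [measureReal_def] using hle
  have hOutLB : ∀ h ∈ H, c1 * (D.margO {x | h x = K+1}ᶜ).toReal ≤ riskOut ℓ D h := by
    intro h hh
    obtain ⟨hm, hr⟩ := hH h hh
    have hA : MeasurableSet ({x : ↥X | h x = K+1}ᶜ) :=
      (hm (measurableSet_singleton (K+1))).compl
    have hT : MeasurableSet (Prod.fst ⁻¹' ({x : ↥X | h x = K+1}ᶜ) : Set (↥X × ℕ)) :=
      hA.preimage measurable_fst
    have hmarg : D.margO ({x | h x = K+1}ᶜ) = D.DO (Prod.fst ⁻¹' ({x | h x = K+1}ᶜ)) :=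
      Measure.map_apply measurable_fst hA
    have hle : ∫ p, (Prod.fst ⁻¹' ({x : ↥X | h x = K+1}ᶜ)).indicator (fun _ => c1) p ∂D.DO
        ≤ riskOut ℓ D h := by
      refine integral_mono ((integrable_const c1).indicator hT) (hIntO h hh) ?_
      intro p
      by_cases hpA : p ∈ Prod.fst ⁻¹' ({x : ↥X | h x = K+1}ᶜ)
      · rw [Set.indicator_of_mem hpA]
        have hp1 : h p.1 ≠ K + 1 := hpA
        have hp2 : h p.1 ∈ Set.Icc 1 K := by
          have ha := (hr p.1).1
          have hb := (hr p.1).2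
          exact ⟨ha, by omega⟩
        exact (hc1le _ hp2).2
      · rw [Set.indicator_of_notMem hpA]
        exact hl_nonneg _ _
    rw [integral_indicator_const _ hT] at hle
    rw [hmarg, mul_comm]
    simpa [measureReal_def] using hle
  -- overlap forces total rejection+acceptance masses to be at least mR
  have hSum : ∀ h ∈ H,
      mR ≤ (D.margI {x | h x = K+1}).toReal + (D.margO {x | h x = K+1}ᶜ).toReal := by
    intro h hh
    obtain ⟨hm, hr⟩ := hH h hh
    have hA : MeasurableSet {x : ↥X | h x = K+1} := hm (measurableSet_singleton (K+1))
    have h1 : m ≤ D.margI {x | h x = K+1} + D.margO ({x | h x = K+1}ᶜ) := by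
      rw [hmdef, ← lintegral_add_compl (fun x => min (fI x) (fO x)) hA]
      gcongr
      · rw [hmI, withDensity_apply _ hA]
        exact lintegral_mono (fun x => min_le_left _ _)
      · rw [hmO, withDensity_apply _ hA.compl]
        exact lintegral_mono (fun x => min_le_right _ _)
    have h2 : m.toReal ≤ (D.margI {x | h x = K+1} + D.margO ({x | h x = K+1}ᶜ)).toReal := by
      refine ENNReal.toReal_mono ?_ h1
      exact ENNReal.add_ne_top.mpr ⟨measure_ne_top _ _, measure_ne_top _ _⟩
    rwa [ENNReal.toReal_add (measure_ne_top _ _) (measure_ne_top _ _)] at h2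
  -- the key uniform lower bound on the α-risk
  have hkey : ∀ h ∈ H, ∀ α : ℝ, 0 ≤ α → α ≤ 1 →
      min α (1 - α) * (c1 * mR) ≤ riskA ℓ D h α := by
    intro h hh α hα0 hα1
    have h1 := hInLB h hh
    have h2 := hOutLB h hh
    have h3 := hSum h hh
    have haI : (0:ℝ) ≤ (D.margI {x | h x = K+1}).toReal := ENNReal.toReal_nonneg
    have haO : (0:ℝ) ≤ (D.margO {x | h x = K+1}ᶜ).toReal := ENNReal.toReal_nonneg
    have h1α : (0:ℝ) ≤ 1 - α := by linarith
    have f0 : c1 * mR ≤ c1 * ((D.margI {x | h x = K+1}).toReal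
        + (D.margO {x | h x = K+1}ᶜ).toReal) := mul_le_mul_of_nonneg_left h3 hc1pos.le
    unfold riskA
    rcases le_total α (1 - α) with hc | hc
    · rw [min_eq_left hc]
      have f1 : α * (c1 * mR) ≤ α * (c1 * ((D.margI {x | h x = K+1}).toReal
          + (D.margO {x | h x = K+1}ᶜ).toReal)) := mul_le_mul_of_nonneg_left f0 hα0
      have f2 : α * (c1 * (D.margI {x | h x = K+1}).toReal)
          ≤ (1 - α) * (c1 * (D.margI {x | h x = K+1}).toReal) :=
        mul_le_mul_of_nonneg_right hc (mul_nonneg hc1pos.le haI)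
      have f3 : (1 - α) * (c1 * (D.margI {x | h x = K+1}).toReal)
          ≤ (1 - α) * riskIn ℓ D h := mul_le_mul_of_nonneg_left h1 h1α
      have f4 : α * (c1 * (D.margO {x | h x = K+1}ᶜ).toReal) ≤ α * riskOut ℓ D h :=
        mul_le_mul_of_nonneg_left h2 hα0
      nlinarith [f1, f2, f3, f4]
    · rw [min_eq_right hc]
      have f1 : (1 - α) * (c1 * mR) ≤ (1 - α) * (c1 * ((D.margI {x | h x = K+1}).toReal
          + (D.margO {x | h x = K+1}ᶜ).toReal)) := mul_le_mul_of_nonneg_left f0 h1α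
      have f2 : (1 - α) * (c1 * (D.margO {x | h x = K+1}ᶜ).toReal)
          ≤ α * (c1 * (D.margO {x | h x = K+1}ᶜ).toReal) :=
        mul_le_mul_of_nonneg_right hc (mul_nonneg hc1pos.le haO)
      have f3 : (1 - α) * (c1 * (D.margI {x | h x = K+1}).toReal)
          ≤ (1 - α) * riskIn ℓ D h := mul_le_mul_of_nonneg_left h1 h1α
      have f4 : α * (c1 * (D.margO {x | h x = K+1}ᶜ).toReal) ≤ α * riskOut ℓ D h :=
        mul_le_mul_of_nonneg_left h2 hα0
      nlinarith [f1, f2, f3, f4]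
  -- Part 1
  have part1 : ∀ α ∈ Set.Ioo (0:ℝ) 1, 0 < ⨅ h : H, riskA ℓ D h.1 α := by
    intro α hα
    have hcpos : 0 < min α (1 - α) * (c1 * mR) := by
      have : 0 < min α (1 - α) := lt_min hα.1 (by linarith [hα.2])
      positivity
    refine lt_of_lt_of_le hcpos (le_ciInf (fun h => ?_))
    exact hkey h.1 h.2 α hα.1.le hα.2.le
  refine ⟨part1, ?_, ?_⟩
  · -- Part 2: linear condition fails
    intro hlin
    have h12 := hlin D hD (1/2) ⟨by norm_num, by norm_num⟩
    rw [hin, hout] at h12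
    have := part1 (1/2) ⟨by norm_num, by norm_num⟩
    rw [h12] at this
    norm_num at this
  · -- Part 3: not learnable
    rintro ⟨ε, hmon, hlim, A, hAH, hAmeas, hAcons⟩
    -- risk of D^α decomposes
    have hjointA : ∀ (a : Set.Ico (0:ℝ) 1), ∀ h ∈ H,
        risk ℓ (D.withPrior a) h = (1 - a.1) * riskIn ℓ D h + a.1 * riskOut ℓ D h := by
      intro a h hh
      have hint1 : Integrable (fun p : ↥X × ℕ => ℓ (h p.1) p.2) D.DI := hIntI h hh
      have hint2 : Integrable (fun p : ↥X × ℕ => ℓ (h p.1) p.2) D.DO := hIntO' h hh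
      have hjoint : (D.withPrior a).joint
          = ENNReal.ofReal (1 - a.1) • D.DI + ENNReal.ofReal a.1 • D.DO := rfl
      unfold risk
      rw [hjoint, integral_add_measure (hint1.smul_measure ENNReal.ofReal_ne_top)
        (hint2.smul_measure ENNReal.ofReal_ne_top),
        integral_smul_measure, integral_smul_measure,
        ENNReal.toReal_ofReal (by linarith [a.2.2] : (0:ℝ) ≤ 1 - a.1),
        ENNReal.toReal_ofReal a.2.1]
      have hdo : ∫ p, ℓ (h p.1) p.2 ∂D.DO = riskOut ℓ D h := by
        refine integral_congr_ae ?_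
        filter_upwards [haeO] with p hp
        rw [hp]
      rw [hdo]
      simp [riskIn, smul_eq_mul]
    -- the zero-prior domain
    set a0 : Set.Ico (0:ℝ) 1 := ⟨0, ⟨le_refl _, one_pos⟩⟩ with ha0def
    have hjoint0 : (D.withPrior a0).joint = D.DI := by
      simp [Domain.joint, Domain.withPrior, ha0def]
    have hrisk0 : ∀ h, risk ℓ (D.withPrior a0) h = riskIn ℓ D h := by
      intro h
      unfold risk riskIn
      rw [hjoint0]
    have hsm : ∀ (a : Set.Ico (0:ℝ) 1) (n : ℕ),
        sampleMeasure (D.withPrior a) n = sampleMeasure D n := fun _ _ => rfl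
    haveI hsmP : ∀ n : ℕ, IsProbabilityMeasure (sampleMeasure D n) := by
      intro n
      show IsProbabilityMeasure (Measure.pi fun _ : Fin n => D.DI)
      infer_instance
    -- c : the positive gap
    set c : ℝ := (1/2 : ℝ) * (c1 * mR) with hcdef
    have hcpos : 0 < c := by positivity
    have hkey12 : ∀ h ∈ H, c ≤ riskA ℓ D h (1/2) := by
      intro h hh
      have := hkey h hh (1/2) (by norm_num) (by norm_num)
      rwa [show min (1/2 : ℝ) (1 - 1/2) = 1/2 by norm_num] at this
    -- main estimate for each n
    have hcn : ∀ n : ℕ, 1 ≤ n → c ≤ ε n := by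
      intro n hn
      haveI := hsmP n
      set gIn : (Fin n → ↥X × ℕ) → ℝ := fun S => riskIn ℓ D (A n S) with hgIndef
      set gOut : (Fin n → ↥X × ℕ) → ℝ := fun S => riskOut ℓ D (A n S) with hgOutdef
      -- measurability of gIn
      have hgInmeas : Measurable gIn := by
        have h0 := hAmeas (D.withPrior a0) (hPU D hD a0) n hn
        have : (fun S : Fin n → ↥X × ℕ => risk ℓ (D.withPrior a0) (A n S)) = gIn :=
          funext fun S => hrisk0 (A n S)
        rwa [this] at h0
      -- measurability of gOut
      set a2 : Set.Ico (0:ℝ) 1 := ⟨1/2, ⟨by norm_num, by norm_num⟩⟩ with ha2def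
      have hg2meas := hAmeas (D.withPrior a2) (hPU D hD a2) n hn
      have hgOutmeas : Measurable gOut := by
        have heq : gOut = fun S : Fin n → ↥X × ℕ =>
            2 * risk ℓ (D.withPrior a2) (A n S) - gIn S := by
          funext S
          have := hjointA a2 (A n S) (hAH n hn S)
          rw [this]
          simp only [hgIndef, hgOutdef, ha2def]
          ring
        rw [heq]
        exact ((hg2meas.const_mul 2).sub hgInmeas)
      -- bounds and integrability
      have hgIn0 : ∀ S, 0 ≤ gIn S := fun S => hInNN _
      have hgOut0 : ∀ S, 0 ≤ gOut S := fun S => hOutNN _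
      have hgInB : ∀ S, gIn S ≤ B' := fun S => hInB _ (hAH n hn S)
      have hgOutB : ∀ S, gOut S ≤ B' := fun S => hOutB _ (hAH n hn S)
      have hgInInt : Integrable gIn (sampleMeasure D n) := by
        refine Integrable.mono' (integrable_const B') hgInmeas.aestronglyMeasurable ?_
        refine Filter.Eventually.of_forall (fun S => ?_)
        rw [Real.norm_eq_abs, abs_of_nonneg (hgIn0 S)]
        exact hgInB S
      have hgOutInt : Integrable gOut (sampleMeasure D n) := by
        refine Integrable.mono' (integrable_const B') hgOutmeas.aestronglyMeasurable ?_
        refine Filter.Eventually.of_forall (fun S => ?_)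
        rw [Real.norm_eq_abs, abs_of_nonneg (hgOut0 S)]
        exact hgOutB S
      set Iin : ℝ := ∫ S, gIn S ∂(sampleMeasure D n) with hIindef
      set Iout : ℝ := ∫ S, gOut S ∂(sampleMeasure D n) with hIoutdef
      have hIin0 : 0 ≤ Iin := integral_nonneg hgIn0
      have hIout0 : 0 ≤ Iout := integral_nonneg hgOut0
      -- (a) Iin ≤ ε n
      have hIinB : Iin ≤ ε n := by
        have h0 := hAcons (D.withPrior a0) (hPU D hD a0) n hn
        have hinf0 : (⨅ h : H, risk ℓ (D.withPrior a0) h.1) = 0 := by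
          rw [iInf_congr (fun h : H => hrisk0 h.1)]
          exact hin
        rw [hinf0, hsm] at h0
        simp only [sub_zero, hrisk0] at h0
        exact h0
      -- (b) ∀ α-domain estimate
      have hIoutB : Iout ≤ ε n := by
        refine le_of_forall_sub_le (fun δ hδ => ?_)
        -- choose h₀ with small OOD risk
        have hio : (⨅ h : H, riskOut ℓ D h.1) < δ := by rw [hout]; exact hδ
        obtain ⟨h₀, hh₀⟩ := exists_lt_of_ciInf_lt hio
        have hstep : ∀ k : ℕ, (1 - ((k:ℝ)+2)⁻¹) * Iout
            ≤ ε n + (((k:ℝ)+2)⁻¹) * B' + (1 - ((k:ℝ)+2)⁻¹) * δ := by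
          intro k
          have hk2 : (0:ℝ) < (k:ℝ) + 2 := by positivity
          have hkinv : (0:ℝ) < ((k:ℝ)+2)⁻¹ := by positivity
          have hkinv1 : ((k:ℝ)+2)⁻¹ ≤ 1/2 := by
            rw [show (1/2 : ℝ) = (2:ℝ)⁻¹ by norm_num]
            exact inv_anti₀ (by norm_num) (by linarith [Nat.cast_nonneg (α := ℝ) k])
          set α : ℝ := 1 - ((k:ℝ)+2)⁻¹ with hαdef
          have hα0 : 0 ≤ α := by rw [hαdef]; linarith
          have hα1 : α < 1 := by rw [hαdef]; linarith
          set ak : Set.Ico (0:ℝ) 1 := ⟨α, ⟨hα0, hα1⟩⟩ with hakdef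
          have hc := hAcons (D.withPrior ak) (hPU D hD ak) n hn
          rw [hsm] at hc
          -- rewrite the integrand
          have hfun : (fun S : Fin n → ↥X × ℕ => risk ℓ (D.withPrior ak) (A n S))
              = fun S => (1 - α) * gIn S + α * gOut S := by
            funext S
            exact hjointA ak (A n S) (hAH n hn S)
          have hIntRisk : Integrable
              (fun S : Fin n → ↥X × ℕ => risk ℓ (D.withPrior ak) (A n S))
              (sampleMeasure D n) := by
            rw [hfun]
            exact (hgInInt.const_mul _).add (hgOutInt.const_mul _)
          rw [integral_sub hIntRisk (integrable_const _)] at hc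
          have hIrisk : ∫ S, risk ℓ (D.withPrior ak) (A n S) ∂(sampleMeasure D n)
              = (1 - α) * Iin + α * Iout := by
            rw [hfun, integral_add (hgInInt.const_mul _) (hgOutInt.const_mul _),
              integral_const_mul, integral_const_mul]
          rw [hIrisk] at hc
          simp only [integral_const, measure_univ, probReal_univ, ENNReal.toReal_one, one_smul] at hc
          -- bound the infimum from above
          have hinfub : (⨅ h : H, risk ℓ (D.withPrior ak) h.1) ≤ (1 - α) * B' + α * δ := by
            have hbdd : BddBelow (Set.range fun h : H => risk ℓ (D.withPrior ak) h.1) := by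
              refine ⟨0, ?_⟩
              rintro x ⟨h, rfl⟩
              exact integral_nonneg (fun p => hl_nonneg _ _)
            refine le_trans (ciInf_le hbdd h₀) ?_
            rw [hjointA ak h₀.1 h₀.2]
            have hb1 := hInB h₀.1 h₀.2
            have hb2 := hh₀.le
            have h1α : (0:ℝ) ≤ 1 - α := by linarith
            nlinarith [mul_le_mul_of_nonneg_left hb1 h1α, mul_le_mul_of_nonneg_left hb2 hα0]
          have hIin2 : 0 ≤ (1 - α) * Iin := mul_nonneg (by linarith) hIin0
          -- combine
          have : α * Iout ≤ ε n + ((1 - α) * B' + α * δ) := by linarith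
          rw [hαdef] at this
          linarith [this]
        -- take the limit k → ∞
        have htend1 : Filter.Tendsto (fun k : ℕ => ((k:ℝ)+2)⁻¹) atTop (nhds 0) := by
          have : Filter.Tendsto (fun k : ℕ => (k:ℝ) + 2) atTop atTop :=
            Filter.tendsto_atTop_add_const_right _ 2 tendsto_natCast_atTop_atTop
          exact this.inv_tendsto_atTop
        have htendL : Filter.Tendsto (fun k : ℕ => (1 - ((k:ℝ)+2)⁻¹) * Iout) atTop
            (nhds Iout) := by
          have := ((tendsto_const_nhds (x := (1:ℝ))).sub htend1).mul
            (tendsto_const_nhds (x := Iout))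
          simpa using this
        have htendR : Filter.Tendsto
            (fun k : ℕ => ε n + (((k:ℝ)+2)⁻¹) * B' + (1 - ((k:ℝ)+2)⁻¹) * δ) atTop
            (nhds (ε n + δ)) := by
          have h1 := (tendsto_const_nhds (x := ε n)).add
            (htend1.mul (tendsto_const_nhds (x := B')))
          have h2 := ((tendsto_const_nhds (x := (1:ℝ))).sub htend1).mul
            (tendsto_const_nhds (x := δ))
          have := h1.add h2
          simpa using this
        have := le_of_tendsto_of_tendsto' htendL htendR hstep
        linarith
      -- (d) conclude c ≤ ε n
      have hIntRA : Integrable (fun S : Fin n → ↥X × ℕ => riskA ℓ D (A n S) (1/2))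
          (sampleMeasure D n) := by
        have : (fun S : Fin n → ↥X × ℕ => riskA ℓ D (A n S) (1/2))
            = fun S => (1 - 1/2) * gIn S + (1/2) * gOut S := rfl
        rw [this]
        exact (hgInInt.const_mul _).add (hgOutInt.const_mul _)
      have hcle : c ≤ ∫ S, riskA ℓ D (A n S) (1/2) ∂(sampleMeasure D n) := by
        have h1 : c = ∫ _S : Fin n → ↥X × ℕ, c ∂(sampleMeasure D n) := by
          simp
        rw [h1]
        exact integral_mono (integrable_const _) hIntRA
          (fun S => hkey12 _ (hAH n hn S))
      have heq2 : ∫ S, riskA ℓ D (A n S) (1/2) ∂(sampleMeasure D n)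
          = (1 - 1/2) * Iin + (1/2) * Iout := by
        have : (fun S : Fin n → ↥X × ℕ => riskA ℓ D (A n S) (1/2))
            = fun S => (1 - 1/2) * gIn S + (1/2) * gOut S := rfl
        rw [this, integral_add (hgInInt.const_mul _) (hgOutInt.const_mul _),
          integral_const_mul, integral_const_mul]
      rw [heq2] at hcle
      linarith
    -- (e) contradiction
    have hev : ∀ᶠ k in atTop, c ≤ ε k := by
      filter_upwards [Filter.eventually_ge_atTop 1] with k hk
      exact hcn k hk
    have : c ≤ 0 := ge_of_tendsto hlim hev
    linarith

end OODF

end
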